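/- Let T and T' be two positively edge-weighted phylogenetic X-trees inducing the same tree metric, i.e., D_T(i,j) = D_{T'}(i,j) for all i, j ∈ X. Then there is a graph isomorphism from T to T' that fixes every element of X and carries the weight of each edge of T to the weight of the corresponding edge of T'. -/

import Mathlib

open SimpleGraph Finset

attribute [local instance] Classical.propDecidable

noncomputable section

namespace TreeMetricAux

variable {V : Type*} {G : SimpleGraph V}

/-- The unique path between two vertices of a tree. -/
def tpath (hT : G.IsTree) (u v : V) : G.Walk u v :=
  (hT.existsUnique_path u v).choose

lemma tpath_isPath (hT : G.IsTree) (u v : V) : (tpath hT u v).IsPath :=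
  (hT.existsUnique_path u v).choose_spec.1

lemma tpath_unique (hT : G.IsTree) {u v : V} (p : G.Walk u v) (hp : p.IsPath) :
    p = tpath hT u v :=
  (hT.existsUnique_path u v).choose_spec.2 p hp

/-- The weighted distance between two vertices of a tree. -/
def tdist (hT : G.IsTree) (w : Sym2 V → ℝ) (u v : V) : ℝ :=
  ((tpath hT u v).edges.map w).sum

lemma tdist_eq_sum (hT : G.IsTree) (w : Sym2 V → ℝ) {u v : V} (p : G.Walk u v)
    (hp : p.IsPath) : tdist hT w u v = (p.edges.map w).sum := by
  rw [tpath_unique hT p hp]; rfl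

@[simp] lemma tdist_self (hT : G.IsTree) (w : Sym2 V → ℝ) (u : V) :
    tdist hT w u u = 0 := by
  rw [tdist_eq_sum hT w Walk.nil Walk.IsPath.nil]; simp

lemma tdist_symm (hT : G.IsTree) (w : Sym2 V → ℝ) (u v : V) :
    tdist hT w u v = tdist hT w v u := by
  rw [tdist_eq_sum hT w (tpath hT v u).reverse ((tpath_isPath hT v u).reverse)]
  rw [Walk.edges_reverse, tdist, List.map_reverse, List.sum_reverse]

end TreeMetricAux

namespace TreeMetricAux2

open TreeMetricAux

variable {V : Type*} {G : SimpleGraph V}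

lemma tdist_nonneg (hT : G.IsTree) {w : Sym2 V → ℝ} (hw : ∀ e ∈ G.edgeSet, 0 < w e)
    (u v : V) : 0 ≤ tdist hT w u v := by
  apply List.sum_nonneg
  intro r hr
  obtain ⟨e, he, rfl⟩ := List.mem_map.mp hr
  exact le_of_lt (hw e ((tpath hT u v).edges_subset_edgeSet he))

lemma eq_of_tdist_eq_zero (hT : G.IsTree) {w : Sym2 V → ℝ} (hw : ∀ e ∈ G.edgeSet, 0 < w e)
    {u v : V} (h : tdist hT w u v = 0) : u = v := by
  by_contra hne
  have hlen : (tpath hT u v).length ≠ 0 := fun h0 => hne (Walk.eq_of_length_eq_zero h0)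
  have hpos : 0 < tdist hT w u v := by
    apply List.sum_pos
    · intro r hr
      obtain ⟨e, he, rfl⟩ := List.mem_map.mp hr
      exact hw e ((tpath hT u v).edges_subset_edgeSet he)
    · intro hnil
      apply hlen
      have := List.map_eq_nil_iff.mp hnil
      rw [← Walk.length_edges, this]; rfl
  linarith

/-- Splitting a distance at a vertex of the path. -/
lemma tdist_split (hT : G.IsTree) (w : Sym2 V → ℝ) {u v m : V} (p : G.Walk u v)
    (hp : p.IsPath) (hm : m ∈ p.support) :
    tdist hT w u v = tdist hT w u m + tdist hT w m v := by
  have hspec := p.take_spec hm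
  have h1 : tdist hT w u v = (((p.takeUntil m hm).append (p.dropUntil m hm)).edges.map w).sum := by
    rw [hspec]; exact tdist_eq_sum hT w p hp
  rw [h1, Walk.edges_append, List.map_append, List.sum_append,
    ← tdist_eq_sum hT w _ (hp.takeUntil hm), ← tdist_eq_sum hT w _ (hp.dropUntil hm)]

/-- First vertex of a walk belonging to a set containing the endpoint. -/
lemma exists_first {u v : V} (p : G.Walk u v) (S : Set V) (hv : v ∈ S) :
    ∃ (c : V) (q : G.Walk u c) (r : G.Walk c v),
      q.append r = p ∧ c ∈ S ∧ ∀ x ∈ q.support, x ∈ S → x = c := by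
  induction p with
  | nil =>
    exact ⟨_, Walk.nil, Walk.nil, rfl, hv, fun x hx _ => by simpa using hx⟩
  | @cons a b c' hadj p ih =>
    by_cases ha : a ∈ S
    · exact ⟨a, Walk.nil, Walk.cons hadj p, rfl, ha, fun x hx _ => by simpa using hx⟩
    · obtain ⟨c0, q', r', hqr, hcS, hdisj⟩ := ih hv
      refine ⟨c0, Walk.cons hadj q', r', by rw [Walk.cons_append, hqr], hcS, ?_⟩
      intro x hx hxS
      rw [Walk.support_cons] at hx
      rcases List.mem_cons.mp hx with hx | hx
      · exact absurd (hx ▸ hxS) ha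
      · exact hdisj x hx hxS

end TreeMetricAux2

namespace TreeMetricAux3

open TreeMetricAux TreeMetricAux2

variable {V : Type*} {G : SimpleGraph V}

/-- The median construction. -/
lemma exists_median (hT : G.IsTree) (w : Sym2 V → ℝ) (a b m : V) :
    ∃ c, c ∈ (tpath hT a b).support ∧
      tdist hT w a b = tdist hT w a c + tdist hT w c b ∧
      tdist hT w a m = tdist hT w a c + tdist hT w c m ∧
      tdist hT w m b = tdist hT w m c + tdist hT w c b := by
  set s := tpath hT m b with hs
  have hsp : s.IsPath := tpath_isPath hT m b
  have hms : m ∈ s.support := s.start_mem_support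
  obtain ⟨c, q, r, hqr, hcS, hdisj⟩ :=
    exists_first (tpath hT a m) {x | x ∈ s.support} hms
  have hqrp : (q.append r).IsPath := by rw [hqr]; exact tpath_isPath hT a m
  have hq : q.IsPath := hqrp.of_append_left
  have hr : r.IsPath := hqrp.of_append_right
  have ham : tdist hT w a m = tdist hT w a c + tdist hT w c m := by
    rw [tdist_eq_sum hT w (q.append r) hqrp, Walk.edges_append, List.map_append,
      List.sum_append, ← tdist_eq_sum hT w q hq, ← tdist_eq_sum hT w r hr]
  have hmb : tdist hT w m b = tdist hT w m c + tdist hT w c b :=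
    tdist_split hT w s hsp hcS
  -- the appended walk from `a` to `b` through `c`
  have hdp : (s.dropUntil c hcS).IsPath := hsp.dropUntil hcS
  have hdnd : (s.dropUntil c hcS).support.Nodup := hdp.support_nodup
  have hceq : (s.dropUntil c hcS).support = c :: (s.dropUntil c hcS).support.tail :=
    (s.dropUntil c hcS).support_eq_cons
  have hcnot : c ∉ (s.dropUntil c hcS).support.tail := by
    have := hdnd; rw [hceq] at this; exact (List.nodup_cons.mp this).1
  have hdisj2 : ∀ x ∈ q.support, x ∉ (s.dropUntil c hcS).support.tail := by
    intro x hx hx'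
    have hxs : x ∈ s.support := by
      apply s.support_dropUntil_subset hcS
      rw [hceq]; exact List.mem_cons_of_mem _ hx'
    have : x = c := hdisj x hx hxs
    exact hcnot (this ▸ hx')
  have htp : (q.append (s.dropUntil c hcS)).IsPath := by
    apply Walk.IsPath.mk'
    rw [Walk.support_append]
    exact List.Nodup.append hq.support_nodup (hdnd.tail)
      (fun x hx hx' => hdisj2 x hx hx')
  have hab : tdist hT w a b = tdist hT w a c + tdist hT w c b := by
    rw [tdist_eq_sum hT w (q.append (s.dropUntil c hcS)) htp, Walk.edges_append,
      List.map_append, List.sum_append, ← tdist_eq_sum hT w q hq,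
      ← tdist_eq_sum hT w _ hdp]
  refine ⟨c, ?_, hab, ham, hmb⟩
  rw [← tpath_unique hT _ htp]
  exact Walk.subset_support_append_left _ _ q.end_mem_support

/-- Membership in the tree path is characterized by the distance equality. -/
lemma mem_tpath_iff (hT : G.IsTree) {w : Sym2 V → ℝ} (hw : ∀ e ∈ G.edgeSet, 0 < w e)
    {a b m : V} :
    m ∈ (tpath hT a b).support ↔
      tdist hT w a b = tdist hT w a m + tdist hT w m b := by
  constructor
  · intro hm; exact tdist_split hT w _ (tpath_isPath hT a b) hm
  · intro h
    obtain ⟨c, hmem, h1, h2, h3⟩ := exists_median hT w a b m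
    have hcm : tdist hT w c m = 0 := by
      have hsymm := tdist_symm hT w m c
      linarith
    have : c = m := eq_of_tdist_eq_zero hT hw hcm
    exact this ▸ hmem

lemma tdist_triangle (hT : G.IsTree) {w : Sym2 V → ℝ} (hw : ∀ e ∈ G.edgeSet, 0 < w e)
    (a b m : V) : tdist hT w a b ≤ tdist hT w a m + tdist hT w m b := by
  obtain ⟨c, _, h1, h2, h3⟩ := exists_median hT w a b m
  have := tdist_nonneg hT hw c m
  have hsymm := tdist_symm hT w m c
  linarith

/-- Two points on a geodesic are comparable. -/
lemma tdist_btw (hT : G.IsTree) {w : Sym2 V → ℝ} (hw : ∀ e ∈ G.edgeSet, 0 < w e)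
    {a v c c' : V}
    (h1 : tdist hT w a v = tdist hT w a c + tdist hT w c v)
    (h2 : tdist hT w a v = tdist hT w a c' + tdist hT w c' v) :
    tdist hT w c c' = tdist hT w a c - tdist hT w a c' ∨
      tdist hT w c c' = tdist hT w a c' - tdist hT w a c := by
  have hc : c ∈ (tpath hT a v).support := (mem_tpath_iff hT hw).mpr h1
  have hc' : c' ∈ (tpath hT a v).support := (mem_tpath_iff hT hw).mpr h2
  set p := tpath hT a v with hp
  have hpp : p.IsPath := tpath_isPath hT a v
  have hc'2 : c' ∈ (p.takeUntil c hc).support ∨ c' ∈ (p.dropUntil c hc).support := by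
    have h := hc'
    conv at h => rw [← p.take_spec hc]
    rwa [Walk.mem_support_append_iff] at h
  rcases hc'2 with h | h
  · left
    have := tdist_split hT w (p.takeUntil c hc) (hpp.takeUntil hc) h
    have hsymm := tdist_symm hT w c' c
    linarith
  · right
    have := tdist_split hT w (p.dropUntil c hc) (hpp.dropUntil hc) h
    linarith

/-- Next vertex after `u` on the path toward `v`. -/
def tnext (hT : G.IsTree) (u v : V) : V := (tpath hT u v).getVert 1

lemma tpath_length_pos (hT : G.IsTree) {u v : V} (h : u ≠ v) :
    0 < (tpath hT u v).length :=
  Nat.pos_of_ne_zero (fun h0 => h (Walk.eq_of_length_eq_zero h0))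

lemma tnext_adj (hT : G.IsTree) {u v : V} (h : u ≠ v) : G.Adj u (tnext hT u v) := by
  have := (tpath hT u v).adj_getVert_succ (tpath_length_pos hT h)
  rwa [Walk.getVert_zero] at this

lemma tnext_mem_support (hT : G.IsTree) {u v : V} (h : u ≠ v) :
    tnext hT u v ∈ (tpath hT u v).support :=
  Walk.mem_support_iff_exists_getVert.mpr ⟨1, rfl, tpath_length_pos hT h⟩

lemma tpath_of_adj (hT : G.IsTree) {u v : V} (h : G.Adj u v) :
    tpath hT u v = Walk.cons h Walk.nil := by
  refine (tpath_unique hT _ ?_).symm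
  rw [Walk.cons_isPath_iff]
  exact ⟨Walk.IsPath.nil, by simp [h.ne]⟩

lemma tnext_of_adj (hT : G.IsTree) {u v : V} (h : G.Adj u v) : tnext hT u v = v := by
  rw [tnext, tpath_of_adj hT h]
  rfl

lemma tdist_of_adj (hT : G.IsTree) (w : Sym2 V → ℝ) {u v : V} (h : G.Adj u v) :
    tdist hT w u v = w s(u, v) := by
  rw [tdist, tpath_of_adj hT h]
  simp

lemma tnext_eq_of_between (hT : G.IsTree) {w : Sym2 V → ℝ}
    (hw : ∀ e ∈ G.edgeSet, 0 < w e) {u v c : V} (huc : u ≠ c)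
    (h : tdist hT w u v = tdist hT w u c + tdist hT w c v) :
    tnext hT u v = tnext hT u c := by
  have hc : c ∈ (tpath hT u v).support := (mem_tpath_iff hT hw).mpr h
  set p := tpath hT u v with hpdef
  have hpp : p.IsPath := tpath_isPath hT u v
  have htake : p.takeUntil c hc = tpath hT u c := tpath_unique hT _ (hpp.takeUntil hc)
  have hlen : 1 ≤ (p.takeUntil c hc).length := by
    by_contra hcon
    push_neg at hcon
    interval_cases h : (p.takeUntil c hc).length
    exact huc (Walk.eq_of_length_eq_zero h)
  have h1 : tnext hT u v = ((p.takeUntil c hc).append (p.dropUntil c hc)).getVert 1 := by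
    show p.getVert 1 = _
    conv_lhs => rw [← p.take_spec hc]
  rw [h1, Walk.getVert_append]
  split_ifs with hlt
  · rw [htake]; rfl
  · have hone : (p.takeUntil c hc).length = 1 := le_antisymm (not_lt.mp hlt) hlen
    have h2 : (p.dropUntil c hc).getVert (1 - (p.takeUntil c hc).length) = c := by
      rw [hone]; simp
    rw [h2, tnext, ← htake]
    have := (p.takeUntil c hc).getVert_length
    rw [hone] at this
    exact this.symm

end TreeMetricAux3

namespace AbstractMax

variable {α : Type*}

lemma pair_zero (d : α → α → ℝ)
    (hsymm : ∀ a b, d a b = d b a) (hnonneg : ∀ a b, 0 ≤ d a b)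
    (htri : ∀ a b c, d a c ≤ d a b + d b c)
    (hbtw : ∀ a v c c', d a v = d a c + d c v → d a v = d a c' + d c' v →
      d c c' = d a c - d a c' ∨ d c c' = d a c' - d a c)
    {v x y a cx cy : α}
    (hxy : d x y = d x v + d v y)
    (hcx1 : d a v = d a cx + d cx v) (hcx3 : d x v = d x cx + d cx v)
    (hcy1 : d a v = d a cy + d cy v) (hcy3 : d y v = d y cy + d cy v) :
    d cx v = 0 ∨ d cy v = 0 := by
  by_contra hcon
  push_neg at hcon
  have hx0 : 0 < d cx v := lt_of_le_of_ne (hnonneg _ _) (Ne.symm hcon.1)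
  have hy0 : 0 < d cy v := lt_of_le_of_ne (hnonneg _ _) (Ne.symm hcon.2)
  have s2 : d cx y = d cx v + d v y :=
    le_antisymm (htri cx v y) (by linarith [htri x cx y, hcx3, hxy])
  have s3 : d cx cy = d cx v + d v cy := by
    refine le_antisymm (htri cx v cy) ?_
    have h1 := htri cx cy y
    have h2 := hsymm cy y
    have h3 := hsymm v cy
    linarith [hcy3, s2, hsymm v y, hsymm y v]
  have h4 := hsymm v cy
  rcases hbtw a v cx cy hcx1 hcy1 with h | h <;> linarith

lemma max_formula (d : α → α → ℝ)
    (hsymm : ∀ a b, d a b = d b a) (hnonneg : ∀ a b, 0 ≤ d a b)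
    (htri : ∀ a b c, d a c ≤ d a b + d b c)
    (hmed : ∀ a b m, ∃ c, d a b = d a c + d c b ∧ d a m = d a c + d c m ∧
      d m b = d m c + d c b)
    (hbtw : ∀ a v c c', d a v = d a c + d c v → d a v = d a c' + d c' v →
      d c c' = d a c - d a c' ∨ d c c' = d a c' - d a c)
    {v x y z : α}
    (hxy : d x y = d x v + d v y) (hxz : d x z = d x v + d v z)
    (hyz : d y z = d y v + d v z) (a : α) :
    d a v = max (max ((d a x + d a y - d x y)/2) ((d a y + d a z - d y z)/2))
      ((d a x + d a z - d x z)/2) := by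
  have ub1 : (d a x + d a y - d x y)/2 ≤ d a v := by
    linarith [htri a v x, htri a v y, hsymm v x, hsymm v y]
  have ub2 : (d a y + d a z - d y z)/2 ≤ d a v := by
    linarith [htri a v y, htri a v z, hsymm v y, hsymm v z]
  have ub3 : (d a x + d a z - d x z)/2 ≤ d a v := by
    linarith [htri a v x, htri a v z, hsymm v x, hsymm v z]
  obtain ⟨cx, hcx1, hcx2, hcx3⟩ := hmed a v x
  obtain ⟨cy, hcy1, hcy2, hcy3⟩ := hmed a v y
  obtain ⟨cz, hcz1, hcz2, hcz3⟩ := hmed a v z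
  -- reorient the third equalities
  have hcx3' : d x v = d x cx + d cx v := hcx3
  have hcy3' : d y v = d y cy + d cy v := hcy3
  have hcz3' : d z v = d z cz + d cz v := hcz3
  have pxy := pair_zero d hsymm hnonneg htri hbtw hxy hcx1 hcx3' hcy1 hcy3'
  have pyz := pair_zero d hsymm hnonneg htri hbtw hyz hcy1 hcy3' hcz1 hcz3'
  have hxz' : d x z = d x v + d v z := hxz
  have pxz := pair_zero d hsymm hnonneg htri hbtw hxz' hcx1 hcx3' hcz1 hcz3'
  -- in each case, one of the three expressions equals `d a v`
  have exy : d cx v = 0 → d cy v = 0 → (d a x + d a y - d x y)/2 = d a v := by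
    intro h1 h2
    have e1 : d a x = d a v + d x v := by linarith [hcx1, hcx2, hcx3', hsymm cx x]
    have e2 : d a y = d a v + d y v := by linarith [hcy1, hcy2, hcy3', hsymm cy y]
    linarith [hxy, hsymm v y, hsymm x v]
  have eyz : d cy v = 0 → d cz v = 0 → (d a y + d a z - d y z)/2 = d a v := by
    intro h1 h2
    have e1 : d a y = d a v + d y v := by linarith [hcy1, hcy2, hcy3', hsymm cy y]
    have e2 : d a z = d a v + d z v := by linarith [hcz1, hcz2, hcz3', hsymm cz z]
    linarith [hyz, hsymm v z, hsymm y v]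
  have exz : d cx v = 0 → d cz v = 0 → (d a x + d a z - d x z)/2 = d a v := by
    intro h1 h2
    have e1 : d a x = d a v + d x v := by linarith [hcx1, hcx2, hcx3', hsymm cx x]
    have e2 : d a z = d a v + d z v := by linarith [hcz1, hcz2, hcz3', hsymm cz z]
    linarith [hxz, hsymm v z, hsymm x v]
  refine le_antisymm ?_ (max_le (max_le ub1 ub2) ub3)
  rcases pxy with h1 | h1
  · rcases pxz with h2 | h2
    · rcases pyz with h3 | h3
      · exact le_trans (le_of_eq (exy h1 h3).symm)
          (le_trans (le_max_left _ _) (le_max_left _ _))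
      · exact le_trans (le_of_eq (exz h1 h3).symm) (le_max_right _ _)
    · exact le_trans (le_of_eq (exz h1 h2).symm) (le_max_right _ _)
  · rcases pyz with h3 | h3
    · rcases pxz with h2 | h2
      · exact le_trans (le_of_eq (exy h2 h1).symm)
          (le_trans (le_max_left _ _) (le_max_left _ _))
      · exact le_trans (le_of_eq (eyz h1 h2).symm)
          (le_trans (le_max_right _ _) (le_max_left _ _))
    · exact le_trans (le_of_eq (eyz h1 h3).symm)
        (le_trans (le_max_right _ _) (le_max_left _ _))
end AbstractMax

namespace TreeMetricAux4

open TreeMetricAux TreeMetricAux2 TreeMetricAux3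

variable {V : Type*} {X : Type*} {G : SimpleGraph V} [Fintype V]

/-- In every branch at a vertex there is a leaf. -/
lemma leaf_branch (hT : G.IsTree) {w : Sym2 V → ℝ} (hw : ∀ e ∈ G.edgeSet, 0 < w e)
    (f : X → V) (hint : ∀ v, v ∉ Set.range f → 3 ≤ G.degree v)
    (v u : V) (h : G.Adj v u) : ∃ x : X, tnext hT v (f x) = u := by
  classical
  set S := Finset.univ.filter (fun y => u ∈ (tpath hT v y).support) with hS
  have huS : u ∈ S := by
    rw [hS, Finset.mem_filter]
    refine ⟨Finset.mem_univ u, ?_⟩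
    rw [tpath_of_adj hT h]
    simp
  obtain ⟨y, hyS, hymax⟩ := S.exists_max_image (fun y => tdist hT w v y) ⟨u, huS⟩
  have huy : u ∈ (tpath hT v y).support := (Finset.mem_filter.mp hyS).2
  have hvy : v ≠ y := by
    rintro rfl
    have hnil : (Walk.nil : G.Walk v v) = tpath hT v v :=
      tpath_unique hT _ Walk.IsPath.nil
    rw [← hnil] at huy
    simp at huy
    exact h.ne' huy
  by_cases hy : y ∈ Set.range f
  · obtain ⟨x, rfl⟩ := hy
    refine ⟨x, ?_⟩
    have hsplit := tdist_split hT w _ (tpath_isPath hT v (f x)) huy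
    have hres := tnext_eq_of_between hT hw h.ne hsplit
    rw [hres, tnext_of_adj hT h]
  · exfalso
    have hdeg := hint y hy
    have hcard : 1 < (G.neighborFinset y).card := by
      have : (G.neighborFinset y).card = G.degree y := G.card_neighborFinset_eq_degree y
      omega
    obtain ⟨z, hz, hzne⟩ := Finset.exists_mem_ne hcard (tnext hT y v)
    have hadjz : G.Adj y z := by rwa [SimpleGraph.mem_neighborFinset] at hz
    have hznotin : z ∉ (tpath hT v y).support := by
      intro hzin
      have hsplit := tdist_split hT w _ (tpath_isPath hT v y) hzin
      have h2 : tdist hT w y v = tdist hT w y z + tdist hT w z v := by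
        rw [tdist_symm hT w y v, tdist_symm hT w y z, tdist_symm hT w z v]
        linarith
      have hres := tnext_eq_of_between hT hw hadjz.ne h2
      rw [tnext_of_adj hT hadjz] at hres
      exact hzne hres.symm
    have hext : ((tpath hT v y).append (Walk.cons hadjz Walk.nil)).IsPath := by
      apply Walk.IsPath.mk'
      rw [Walk.support_append]
      refine List.Nodup.append (tpath_isPath hT v y).support_nodup ?_ ?_
      · simp
      · intro t ht ht'
        simp at ht'
        rw [ht'] at ht
        exact hznotin ht
    have hzS : z ∈ S := by
      rw [hS, Finset.mem_filter]
      refine ⟨Finset.mem_univ z, ?_⟩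
      rw [← tpath_unique hT _ hext]
      exact Walk.subset_support_append_left _ _ huy
    have hlt : tdist hT w v y < tdist hT w v z := by
      rw [tdist_eq_sum hT w _ hext, Walk.edges_append, List.map_append, List.sum_append]
      have : ((Walk.cons hadjz Walk.nil).edges.map w).sum = w s(y, z) := by simp
      rw [this, ← tdist_eq_sum hT w _ (tpath_isPath hT v y)]
      have := hw s(y, z) ((SimpleGraph.mem_edgeSet G).mpr hadjz)
      linarith
    exact absurd (hymax z hzS) (not_le.mpr hlt)

lemma nonempty_X (hT : G.IsTree) {w : Sym2 V → ℝ} (hw : ∀ e ∈ G.edgeSet, 0 < w e)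
    (f : X → V) (hint : ∀ v, v ∉ Set.range f → 3 ≤ G.degree v) : Nonempty X := by
  obtain ⟨v⟩ := hT.isConnected.nonempty
  by_cases hv : v ∈ Set.range f
  · obtain ⟨x, _⟩ := hv; exact ⟨x⟩
  · have hdeg := hint v hv
    have : 0 < G.degree v := by omega
    obtain ⟨u, hu⟩ := (G.degree_pos_iff_exists_adj v).mp this
    obtain ⟨x, _⟩ := leaf_branch hT hw f hint v u hu
    exact ⟨x⟩

/-- For any two vertices there is a leaf behind the first one. -/
lemma exists_leaf_through (hT : G.IsTree) {w : Sym2 V → ℝ}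
    (hw : ∀ e ∈ G.edgeSet, 0 < w e)
    (f : X → V) (hint : ∀ v, v ∉ Set.range f → 3 ≤ G.degree v)
    (p q : V) :
    ∃ x : X, tdist hT w (f x) q = tdist hT w (f x) p + tdist hT w p q := by
  by_cases hpq : p = q
  · subst hpq
    obtain ⟨x⟩ := nonempty_X hT hw f hint
    exact ⟨x, by simp⟩
  by_cases hp : p ∈ Set.range f
  · obtain ⟨x, rfl⟩ := hp
    exact ⟨x, by simp⟩
  · have hdeg := hint p hp
    have hcard : 1 < (G.neighborFinset p).card := by
      have : (G.neighborFinset p).card = G.degree p := G.card_neighborFinset_eq_degree p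
      omega
    obtain ⟨t', ht', htne⟩ := Finset.exists_mem_ne hcard (tnext hT p q)
    have hadj : G.Adj p t' := by rwa [SimpleGraph.mem_neighborFinset] at ht'
    obtain ⟨x, hx⟩ := leaf_branch hT hw f hint p t' hadj
    refine ⟨x, ?_⟩
    obtain ⟨c, hcmem, h1, h2, h3⟩ := exists_median hT w (f x) q p
    by_cases hcp : c = p
    · rw [hcp] at h1; exact h1
    · exfalso
      have e1 : tdist hT w p (f x) = tdist hT w p c + tdist hT w c (f x) := by
        rw [tdist_symm hT w p (f x), tdist_symm hT w p c, tdist_symm hT w c (f x)]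
        linarith
      have hpc : p ≠ c := fun hh => hcp hh.symm
      have g1 := tnext_eq_of_between hT hw hpc e1
      have g2 := tnext_eq_of_between hT hw hpc h3
      exact htne (by rw [← hx, g1, ← g2])

lemma tdist_leaf_determined (hT : G.IsTree) {w : Sym2 V → ℝ}
    (hw : ∀ e ∈ G.edgeSet, 0 < w e)
    (f : X → V) (hint : ∀ v, v ∉ Set.range f → 3 ≤ G.degree v)
    {u v : V} (h : ∀ x : X, tdist hT w (f x) u = tdist hT w (f x) v) : u = v := by
  obtain ⟨x, hx⟩ := exists_leaf_through hT hw f hint u v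
  have := h x
  exact eq_of_tdist_eq_zero hT hw (by linarith)

/-- An internal vertex is the median of three leaves. -/
lemma three_leaves (hT : G.IsTree) {w : Sym2 V → ℝ}
    (hw : ∀ e ∈ G.edgeSet, 0 < w e)
    (f : X → V) (hint : ∀ v, v ∉ Set.range f → 3 ≤ G.degree v)
    {v : V} (hv : v ∉ Set.range f) :
    ∃ x y z : X,
      tdist hT w (f x) (f y) = tdist hT w (f x) v + tdist hT w v (f y) ∧
      tdist hT w (f x) (f z) = tdist hT w (f x) v + tdist hT w v (f z) ∧
      tdist hT w (f y) (f z) = tdist hT w (f y) v + tdist hT w v (f z) := by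
  have hdeg := hint v hv
  have hcard : 3 ≤ (G.neighborFinset v).card := by
    have : (G.neighborFinset v).card = G.degree v := G.card_neighborFinset_eq_degree v
    omega
  obtain ⟨u₁, hu₁⟩ := Finset.card_pos.mp (by omega : 0 < (G.neighborFinset v).card)
  have hcard2 : 0 < ((G.neighborFinset v).erase u₁).card := by
    rw [Finset.card_erase_of_mem hu₁]; omega
  obtain ⟨u₂, hu₂⟩ := Finset.card_pos.mp hcard2
  have hcard3 : 0 < (((G.neighborFinset v).erase u₁).erase u₂).card := by
    rw [Finset.card_erase_of_mem hu₂, Finset.card_erase_of_mem hu₁]; omega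
  obtain ⟨u₃, hu₃⟩ := Finset.card_pos.mp hcard3
  obtain ⟨h32, hu₃'⟩ := Finset.mem_erase.mp hu₃
  obtain ⟨h31, hu₃''⟩ := Finset.mem_erase.mp hu₃'
  obtain ⟨h21, hu₂'⟩ := Finset.mem_erase.mp hu₂
  have ha1 : G.Adj v u₁ := by rwa [SimpleGraph.mem_neighborFinset] at hu₁
  have ha2 : G.Adj v u₂ := by rwa [SimpleGraph.mem_neighborFinset] at hu₂'
  have ha3 : G.Adj v u₃ := by rwa [SimpleGraph.mem_neighborFinset] at hu₃''
  obtain ⟨x, hx⟩ := leaf_branch hT hw f hint v u₁ ha1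
  obtain ⟨y, hy⟩ := leaf_branch hT hw f hint v u₂ ha2
  obtain ⟨z, hz⟩ := leaf_branch hT hw f hint v u₃ ha3
  have pair : ∀ a b : X, tnext hT v (f a) ≠ tnext hT v (f b) →
      tdist hT w (f a) (f b) = tdist hT w (f a) v + tdist hT w v (f b) := by
    intro a b hne
    obtain ⟨c, hcmem, h1, h2, h3⟩ := exists_median hT w (f a) (f b) v
    by_cases hcv : c = v
    · rw [hcv] at h1; exact h1
    · exfalso
      have hvc : v ≠ c := fun hh => hcv hh.symm
      have e1 : tdist hT w v (f a) = tdist hT w v c + tdist hT w c (f a) := by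
        rw [tdist_symm hT w v (f a), tdist_symm hT w v c, tdist_symm hT w c (f a)]
        linarith
      have g1 := tnext_eq_of_between hT hw hvc e1
      have g2 := tnext_eq_of_between hT hw hvc h3
      exact hne (by rw [g1, g2])
  refine ⟨x, y, z, ?_, ?_, ?_⟩
  · exact pair x y (by rw [hx, hy]; exact fun hh => h21 hh.symm)
  · exact pair x z (by rw [hx, hz]; exact fun hh => h31 hh.symm)
  · exact pair y z (by rw [hy, hz]; exact fun hh => h32 hh.symm)

/-- Adjacency is characterized by the metric. -/
lemma adj_iff_tdist (hT : G.IsTree) {w : Sym2 V → ℝ}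
    (hw : ∀ e ∈ G.edgeSet, 0 < w e) {u v : V} :
    G.Adj u v ↔ u ≠ v ∧
      ∀ m, tdist hT w u m + tdist hT w m v = tdist hT w u v → m = u ∨ m = v := by
  constructor
  · intro h
    refine ⟨h.ne, fun m hm => ?_⟩
    have hmem : m ∈ (tpath hT u v).support := (mem_tpath_iff hT hw).mpr hm.symm
    rw [tpath_of_adj hT h] at hmem
    simpa using hmem
  · rintro ⟨hne, hall⟩
    have h1 : tnext hT u v ∈ (tpath hT u v).support := tnext_mem_support hT hne
    have h2 := tdist_split hT w _ (tpath_isPath hT u v) h1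
    rcases hall _ h2.symm with h3 | h3
    · exfalso
      have hadj := tnext_adj hT hne
      rw [h3] at hadj
      exact G.loopless.irrefl u hadj
    · have := tnext_adj hT hne
      rwa [h3] at this

end TreeMetricAux4

open TreeMetricAux TreeMetricAux2 TreeMetricAux3 TreeMetricAux4 AbstractMax

/-- uniqueness in the four-point theorem: two positively edge-weighted
phylogenetic `X`-trees inducing the same tree metric on `X` are isomorphic by a
weight-preserving graph isomorphism fixing every element of `X`. -/
theorem tree_metric_determines_tree
    {X V V' : Type*} [Fintype V] [Fintype V']
    (G : SimpleGraph V) (G' : SimpleGraph V')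
    (f : X → V) (f' : X → V')
    (hf : Function.Injective f) (hf' : Function.Injective f')
    (hT : G.IsTree) (hT' : G'.IsTree)
    -- the leaves of `G` (resp. `G'`) are exactly the elements of `X`
    (hleaf : ∀ v, G.degree v = 1 ↔ v ∈ Set.range f)
    (hleaf' : ∀ v, G'.degree v = 1 ↔ v ∈ Set.range f')
    (hint : ∀ v, v ∉ Set.range f → 3 ≤ G.degree v)
    (hint' : ∀ v, v ∉ Set.range f' → 3 ≤ G'.degree v)
    -- positive edge weights
    (w : Sym2 V → ℝ) (w' : Sym2 V' → ℝ)
    (hw : ∀ e ∈ G.edgeSet, 0 < w e) (hw' : ∀ e ∈ G'.edgeSet, 0 < w' e)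
    -- the two induced tree metrics agree on `X`
    (heq : ∀ x y : X, ∀ p : G.Walk (f x) (f y), ∀ p' : G'.Walk (f' x) (f' y),
      p.IsPath → p'.IsPath → (p.edges.map w).sum = (p'.edges.map w').sum) :
    -- weight-preserving isomorphism fixing `X`
    ∃ φ : G ≃g G', (∀ x : X, φ (f x) = f' x) ∧
      ∀ a b : V, G.Adj a b → w' s(φ a, φ b) = w s(a, b) := by
  classical
  set D := tdist hT w with hDdef
  set D' := tdist hT' w' with hD'def
  have hDD' : ∀ x y : X, D (f x) (f y) = D' (f' x) (f' y) := fun x y =>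
    heq x y (tpath hT (f x) (f y)) (tpath hT' (f' x) (f' y))
      (tpath_isPath hT _ _) (tpath_isPath hT' _ _)
  have hsymmD : ∀ a b, D a b = D b a := tdist_symm hT w
  have hsymmD' : ∀ a b, D' a b = D' b a := tdist_symm hT' w'
  have hnonnegD : ∀ a b, 0 ≤ D a b := tdist_nonneg hT hw
  have hnonnegD' : ∀ a b, 0 ≤ D' a b := tdist_nonneg hT' hw'
  have htriD : ∀ a b c, D a c ≤ D a b + D b c := fun a b c => by
    have := tdist_triangle hT hw a c b; linarith
  have htriD' : ∀ a b c, D' a c ≤ D' a b + D' b c := fun a b c => by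
    have := tdist_triangle hT' hw' a c b; linarith
  have hmedD : ∀ a b m, ∃ c, D a b = D a c + D c b ∧ D a m = D a c + D c m ∧
      D m b = D m c + D c b := fun a b m => by
    obtain ⟨c, _, h1, h2, h3⟩ := exists_median hT w a b m; exact ⟨c, h1, h2, h3⟩
  have hmedD' : ∀ a b m, ∃ c, D' a b = D' a c + D' c b ∧ D' a m = D' a c + D' c m ∧
      D' m b = D' m c + D' c b := fun a b m => by
    obtain ⟨c, _, h1, h2, h3⟩ := exists_median hT' w' a b m; exact ⟨c, h1, h2, h3⟩
  have hbtwD : ∀ a v c c', D a v = D a c + D c v → D a v = D a c' + D c' v →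
      D c c' = D a c - D a c' ∨ D c c' = D a c' - D a c := fun a v c c' h1 h2 =>
    tdist_btw hT hw h1 h2
  have hbtwD' : ∀ a v c c', D' a v = D' a c + D' c v → D' a v = D' a c' + D' c' v →
      D' c c' = D' a c - D' a c' ∨ D' c c' = D' a c' - D' a c := fun a v c c' h1 h2 =>
    tdist_btw hT' hw' h1 h2
  -- the key existence statement
  have key : ∀ v : V, ∃ v' : V', ∀ a : X, D' (f' a) v' = D (f a) v := by
    intro v
    by_cases hv : v ∈ Set.range f
    · obtain ⟨x, rfl⟩ := hv
      exact ⟨f' x, fun a => (hDD' a x).symm⟩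
    · obtain ⟨x, y, z, hxy, hxz, hyz⟩ := three_leaves hT hw f hint hv
      obtain ⟨c, _, h1, h2, h3⟩ := exists_median hT' w' (f' x) (f' y) (f' z)
      refine ⟨c, fun a => ?_⟩
      have hm1 := max_formula D hsymmD hnonnegD htriD hmedD hbtwD hxy hxz hyz (f a)
      have hyz' : D' (f' y) (f' z) = D' (f' y) c + D' c (f' z) := by
        have s1 := hsymmD' (f' y) (f' z)
        have s2 := hsymmD' (f' y) c
        have s3 := hsymmD' c (f' z)
        linarith
      have hm2 := max_formula D' hsymmD' hnonnegD' htriD' hmedD' hbtwD' h1 h2 hyz' (f' a)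
      rw [hm1, hm2, hDD' a x, hDD' a y, hDD' a z, hDD' x y, hDD' x z, hDD' y z]
  have key' : ∀ v' : V', ∃ v : V, ∀ a : X, D (f a) v = D' (f' a) v' := by
    intro v'
    by_cases hv : v' ∈ Set.range f'
    · obtain ⟨x, rfl⟩ := hv
      exact ⟨f x, fun a => hDD' a x⟩
    · obtain ⟨x, y, z, hxy, hxz, hyz⟩ := three_leaves hT' hw' f' hint' hv
      obtain ⟨c, _, h1, h2, h3⟩ := exists_median hT w (f x) (f y) (f z)
      refine ⟨c, fun a => ?_⟩
      have hm1 := max_formula D' hsymmD' hnonnegD' htriD' hmedD' hbtwD' hxy hxz hyz (f' a)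
      have hyz' : D (f y) (f z) = D (f y) c + D c (f z) := by
        have s1 := hsymmD (f y) (f z)
        have s2 := hsymmD (f y) c
        have s3 := hsymmD c (f z)
        linarith
      have hm2 := max_formula D hsymmD hnonnegD htriD hmedD hbtwD h1 h2 hyz' (f a)
      rw [hm1, hm2, hDD' a x, hDD' a y, hDD' a z, hDD' x y, hDD' x z, hDD' y z]
  choose φ0 hφ0 using key
  choose ψ0 hψ0 using key'
  have hleft : ∀ v, ψ0 (φ0 v) = v := fun v =>
    tdist_leaf_determined hT hw f hint (fun a => by
      show D (f a) (ψ0 (φ0 v)) = D (f a) v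
      rw [hψ0 (φ0 v) a, hφ0 v a])
  have hright : ∀ v', φ0 (ψ0 v') = v' := fun v' =>
    tdist_leaf_determined hT' hw' f' hint' (fun a => by
      show D' (f' a) (φ0 (ψ0 v')) = D' (f' a) v'
      rw [hφ0 (ψ0 v') a, hψ0 v' a])
  have hinj : Function.Injective φ0 := fun a b hab => by
    rw [← hleft a, hab, hleft b]
  have hdpres : ∀ u v : V, D' (φ0 u) (φ0 v) = D u v := by
    intro u v
    apply le_antisymm
    · obtain ⟨a, ha⟩ := exists_leaf_through hT' hw' f' hint' (φ0 u) (φ0 v)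
      rw [← hD'def] at ha
      rw [hφ0 v a, hφ0 u a] at ha
      have := htriD (f a) u v
      linarith
    · obtain ⟨a, ha⟩ := exists_leaf_through hT hw f hint u v
      rw [← hDdef] at ha
      have h2 := htriD' (f' a) (φ0 u) (φ0 v)
      rw [hφ0 v a, hφ0 u a] at h2
      linarith
  have hmap : ∀ a b : V, G'.Adj (φ0 a) (φ0 b) ↔ G.Adj a b := by
    intro a b
    rw [adj_iff_tdist hT hw (u := a) (v := b),
      adj_iff_tdist hT' hw' (u := φ0 a) (v := φ0 b)]
    constructor
    · rintro ⟨hne', hall'⟩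
      refine ⟨fun hh => hne' (by rw [hh]), fun m hm => ?_⟩
      have hm2 : D a m + D m b = D a b := hm
      have hm' : D' (φ0 a) (φ0 m) + D' (φ0 m) (φ0 b) = D' (φ0 a) (φ0 b) := by
        rw [hdpres, hdpres, hdpres]; exact hm2
      rcases hall' (φ0 m) hm' with h | h
      · exact Or.inl (hinj h)
      · exact Or.inr (hinj h)
    · rintro ⟨hne, hall⟩
      refine ⟨fun hh => hne (hinj hh), fun m' hm' => ?_⟩
      rw [← hright m'] at hm' ⊢
      rw [← hD'def, hdpres, hdpres, hdpres] at hm'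
      rcases hall _ hm' with h | h
      · exact Or.inl (by rw [h])
      · exact Or.inr (by rw [h])
  refine ⟨⟨⟨φ0, ψ0, hleft, hright⟩, fun {a b} => hmap a b⟩, ?_, ?_⟩
  · intro x
    apply tdist_leaf_determined hT' hw' f' hint'
    intro a
    show D' (f' a) (φ0 (f x)) = D' (f' a) (f' x)
    rw [hφ0 (f x) a, hDD' a x]
  · intro a b hab
    have hadj' : G'.Adj (φ0 a) (φ0 b) := (hmap a b).mpr hab
    show w' s(φ0 a, φ0 b) = w s(a, b)
    rw [← tdist_of_adj hT' w' hadj', ← tdist_of_adj hT w hab]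
    exact hdpres a b
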